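/- Let λ₁, λ₂, λ₃, μ₁, μ₂, μ₃ be real numbers, ε, ε̃ ∈ {-1,1}, and c ≠ c̃ real numbers satisfying c + ε·λᵢ·λⱼ = c̃ + ε̃·μᵢ·μⱼ for all 1 ≤ i ≠ j ≤ 3. If λ₁ = λ₂ =: λ, then either μ₃ = 0 (in which case c - c̃ + ε·λ·λ₃ = 0 and c - c̃ + ε·λ² = ε̃·μ₁·μ₂) or μ₁ = μ₂ =: μ (in which case c - c̃ + ε·λ² = ε̃·μ² and c - c̃ + ε·λ·λ₃ = ε̃·μ·μ₃). -/
import Mathlib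


/-- Lemma 3.2(a) algebraic content: if `c + ε λᵢ λⱼ = c̃ + ε̃ μᵢ μⱼ` for all `i ≠ j`
and `λ₁ = λ₂ = λ`, then either `μ₃ = 0` (with `c - c̃ + ε λ λ₃ = 0` and
`c - c̃ + ε λ² = ε̃ μ₁ μ₂`) or `μ₁ = μ₂ = μ` (with `c - c̃ + ε λ² = ε̃ μ²` and
`c - c̃ + ε λ λ₃ = ε̃ μ μ₃`). -/
theorem stmt_7 (l₁ l₂ l₃ m₁ m₂ m₃ ε εt c ct : ℝ)
    (hε : ε = 1 ∨ ε = -1) (hεt : εt = 1 ∨ εt = -1) (hc : c ≠ ct)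
    (h₁₂ : c + ε * l₁ * l₂ = ct + εt * m₁ * m₂)
    (h₁₃ : c + ε * l₁ * l₃ = ct + εt * m₁ * m₃)
    (h₂₃ : c + ε * l₂ * l₃ = ct + εt * m₂ * m₃)
    (hl : l₁ = l₂) :
    (m₃ = 0 ∧ c - ct + ε * l₁ * l₃ = 0 ∧ c - ct + ε * l₁ ^ 2 = εt * m₁ * m₂) ∨
    (m₁ = m₂ ∧ c - ct + ε * l₁ ^ 2 = εt * m₁ ^ 2 ∧ c - ct + ε * l₁ * l₃ = εt * m₁ * m₃) := by
  subst hl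
  have hεt0 : εt ≠ 0 := by rcases hεt with h|h <;> simp [h]
  have key : m₃ * (m₁ - m₂) = 0 := by
    have := h₁₃.symm.trans h₂₃
    have h2 : εt * m₁ * m₃ = εt * m₂ * m₃ := by linarith
    have := mul_left_cancel₀ hεt0 (by ring_nf; ring_nf at h2; linarith : εt * (m₃ * (m₁ - m₂)) = εt * 0)
    linarith
  rcases mul_eq_zero.mp key with h3 | h12
  · left
    refine ⟨h3, by rw [h3] at h₁₃; linarith, by nlinarith⟩
  · right
    have : m₁ = m₂ := by linarith
    subst this; exact ⟨rfl, by linear_combination h₁₂, by linear_combination h₂₃⟩
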